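/- (Elsner's eigenvalue perturbation theorem) Let A, B \in \mathbb{C}^{n \times n}. Then the Hausdorff distance between the spectra of A and B satisfies \mu_H(\sigma(A), \sigma(B)) \le (\|A\|_2 + \|B\|_2)^{1 - 1/n} \|A - B\|_2^{1/n}. -/

import Mathlib

open scoped Real BigOperators
open Matrix

/-- The spectral (operator) norm of a complex matrix. -/
noncomputable def sNorm {m n : ℕ} (A : Matrix (Fin m) (Fin n) ℂ) : ℝ :=
  ‖LinearMap.toContinuousLinearMap (Matrix.toEuclideanLin A)‖

/-- The singular values of a complex matrix, in decreasing order: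
`svals A j` is the `(j+1)`-st largest singular value, obtained by sorting the
square roots of the eigenvalues of `Aᴴ * A` in decreasing order. -/
noncomputable def svals {m n : ℕ} (A : Matrix (Fin m) (Fin n) ℂ) : Fin n → ℝ :=
  fun j =>
    Real.sqrt ((Matrix.isHermitian_conjTranspose_mul_self A).eigenvalues
      (Tuple.sort (Matrix.isHermitian_conjTranspose_mul_self A).eigenvalues j.rev))

namespace ElsnerAux
variable {n : ℕ}

local notation "⟪" x ", " y "⟫" => @inner ℂ _ _ x y

lemma mul_conj_eq (z : ℂ) : z * (starRingEnd ℂ) z = ((‖z‖ ^ 2 : ℝ) : ℂ) := by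
  rw [Complex.mul_conj]
  norm_cast
  rw [Complex.sq_norm]

lemma norm_apply_le (A : Matrix (Fin n) (Fin n) ℂ) (x : EuclideanSpace ℂ (Fin n)) :
    ‖Matrix.toEuclideanLin A x‖ ≤ sNorm A * ‖x‖ := by
  have h : Matrix.toEuclideanLin A x
      = (LinearMap.toContinuousLinearMap (Matrix.toEuclideanLin A)) x := rfl
  rw [h, sNorm]
  exact (LinearMap.toContinuousLinearMap (Matrix.toEuclideanLin A)).le_opNorm x

lemma sNorm_nonneg (A : Matrix (Fin n) (Fin n) ℂ) : 0 ≤ sNorm A := norm_nonneg _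

lemma abs_det_le (hn : 0 < n) (M : Matrix (Fin n) (Fin n) ℂ)
    (x : EuclideanSpace ℂ (Fin n)) (hx : ‖x‖ = 1) :
    ‖M.det‖ ≤ ‖Matrix.toEuclideanLin M x‖ * sNorm M ^ (n - 1) := by
  set H : Matrix (Fin n) (Fin n) ℂ := Mᴴ * M with hHdef
  have hH : H.IsHermitian := Matrix.isHermitian_conjTranspose_mul_self M
  set μ : Fin n → ℝ := hH.eigenvalues with hμdef
  set v := hH.eigenvectorBasis with hvdef
  have hcomp : Matrix.toEuclideanLin H
      = (Matrix.toEuclideanLin Mᴴ).comp (Matrix.toEuclideanLin M) := by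
    rw [hHdef, Matrix.toEuclideanLin_eq_toLin,
      Matrix.toLin_mul (PiLp.basisFun 2 ℂ (Fin n)) (PiLp.basisFun 2 ℂ (Fin n))
        (PiLp.basisFun 2 ℂ (Fin n))]
  have hinner : ∀ y z : EuclideanSpace ℂ (Fin n),
      ⟪Matrix.toEuclideanLin M y, Matrix.toEuclideanLin M z⟫
        = ⟪y, Matrix.toEuclideanLin H z⟫ := by
    intro y z
    rw [hcomp, LinearMap.comp_apply, Matrix.toEuclideanLin_conjTranspose_eq_adjoint,
      LinearMap.adjoint_inner_right]
  have hTv : ∀ i, Matrix.toEuclideanLin H (v i) = (μ i : ℂ) • v i := by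
    intro i
    have h := hH.mulVec_eigenvectorBasis i
    ext j
    have := congrFun h j
    simpa [Matrix.toEuclideanLin_apply, Complex.real_smul] using this
  -- μ i = ‖T M (v i)‖ ^ 2
  have hμ_eq : ∀ i, (μ i : ℝ) = ‖Matrix.toEuclideanLin M (v i)‖ ^ 2 := by
    intro i
    have h1 : ⟪Matrix.toEuclideanLin M (v i), Matrix.toEuclideanLin M (v i)⟫
        = (μ i : ℂ) := by
      rw [hinner, hTv, inner_smul_right, inner_self_eq_norm_sq_to_K,
        v.orthonormal.1 i]
      push_cast; ring
    have h2 : ⟪Matrix.toEuclideanLin M (v i), Matrix.toEuclideanLin M (v i)⟫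
        = ((‖Matrix.toEuclideanLin M (v i)‖ ^ 2 : ℝ) : ℂ) := by
      rw [inner_self_eq_norm_sq_to_K]; norm_cast
    have := h1.symm.trans h2
    exact_mod_cast this
  have hμ_nonneg : ∀ i, 0 ≤ μ i := fun i => (hμ_eq i).symm ▸ sq_nonneg _
  have hμ_le : ∀ i, μ i ≤ sNorm M ^ 2 := by
    intro i
    rw [hμ_eq i]
    have h := norm_apply_le M (v i)
    rw [v.orthonormal.1 i, mul_one] at h
    exact pow_le_pow_left₀ (norm_nonneg _) h 2
  -- ‖T M x‖ ^ 2 = ∑ μ i * ‖⟪x, v i⟫‖ ^ 2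
  have hsym : LinearMap.IsSymmetric (Matrix.toEuclideanLin H) :=
    Matrix.isHermitian_iff_isSymmetric.mp hH
  have hterm : ∀ z : EuclideanSpace ℂ (Fin n), ∀ i,
      ⟪z, v i⟫ * ⟪v i, Matrix.toEuclideanLin H z⟫
        = ((μ i * ‖⟪z, v i⟫‖ ^ 2 : ℝ) : ℂ) := by
    intro z i
    rw [← hsym (v i) z, hTv, inner_smul_left, Complex.conj_ofReal,
      show ⟪v i, z⟫ = starRingEnd ℂ ⟪z, v i⟫ from (inner_conj_symm _ _).symm,
      Complex.ofReal_mul, ← mul_conj_eq]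
    ring
  have hexp : (‖Matrix.toEuclideanLin M x‖ ^ 2 : ℝ)
      = ∑ i, μ i * ‖⟪x, v i⟫‖ ^ 2 := by
    have h1 := (v.sum_inner_mul_inner x (Matrix.toEuclideanLin H x)).symm
    have h2 : ⟪x, Matrix.toEuclideanLin H x⟫
        = ((∑ i, μ i * ‖⟪x, v i⟫‖ ^ 2 : ℝ) : ℂ) := by
      rw [h1, Finset.sum_congr rfl fun i _ => hterm x i]
      norm_cast
    have h3 : ⟪Matrix.toEuclideanLin M x, Matrix.toEuclideanLin M x⟫
        = ((‖Matrix.toEuclideanLin M x‖ ^ 2 : ℝ) : ℂ) := by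
      rw [inner_self_eq_norm_sq_to_K]; norm_cast
    have := h3.symm.trans ((hinner x x).trans h2)
    exact_mod_cast this
  have hpar : (1 : ℝ) = ∑ i, ‖⟪x, v i⟫‖ ^ 2 := by
    have h1 := (v.sum_inner_mul_inner x x).symm
    have h2 : ⟪x, x⟫ = ((∑ i, ‖⟪x, v i⟫‖ ^ 2 : ℝ) : ℂ) := by
      rw [h1, Finset.sum_congr rfl fun i _ => by
        rw [show ⟪v i, x⟫ = starRingEnd ℂ ⟪x, v i⟫ from (inner_conj_symm _ _).symm,
          mul_conj_eq]]
      norm_cast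
    have h3 : ⟪x, x⟫ = ((1 : ℝ) : ℂ) := by
      rw [inner_self_eq_norm_sq_to_K, hx]; norm_cast
    have := h3.symm.trans h2
    exact_mod_cast this
  -- min eigenvalue
  obtain ⟨j, -, hj⟩ := Finset.exists_min_image Finset.univ μ
    ⟨⟨0, hn⟩, Finset.mem_univ _⟩
  have hμj : μ j ≤ ‖Matrix.toEuclideanLin M x‖ ^ 2 := by
    rw [hexp]
    calc μ j = μ j * ∑ i, ‖⟪x, v i⟫‖ ^ 2 := by rw [← hpar, mul_one]
    _ = ∑ i, μ j * ‖⟪x, v i⟫‖ ^ 2 := Finset.mul_sum _ _ _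
    _ ≤ ∑ i, μ i * ‖⟪x, v i⟫‖ ^ 2 :=
        Finset.sum_le_sum fun i _ =>
          mul_le_mul_of_nonneg_right (hj i (Finset.mem_univ i)) (sq_nonneg _)
  -- |det M|^2 = ∏ μ i
  have hdet : (‖M.det‖ ^ 2 : ℝ) = ∏ i, μ i := by
    have h1 : H.det = ((∏ i, μ i : ℝ) : ℂ) := by
      rw [hH.det_eq_prod_eigenvalues]; push_cast; rfl
    have h2 : H.det = ((‖M.det‖ ^ 2 : ℝ) : ℂ) := by
      rw [hHdef, Matrix.det_mul, Matrix.det_conjTranspose, mul_comm,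
        show star M.det = starRingEnd ℂ M.det from rfl, mul_conj_eq]
    have := h2.symm.trans h1
    exact_mod_cast this
  -- combine
  have hprod : ∏ i ∈ Finset.univ.erase j, μ i ≤ (sNorm M ^ 2) ^ (n - 1) := by
    calc ∏ i ∈ Finset.univ.erase j, μ i
        ≤ ∏ _i ∈ Finset.univ.erase j, sNorm M ^ 2 :=
          Finset.prod_le_prod (fun i _ => hμ_nonneg i) (fun i _ => hμ_le i)
    _ = (sNorm M ^ 2) ^ (n - 1) := by
        rw [Finset.prod_const, Finset.card_erase_of_mem (Finset.mem_univ j),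
          Finset.card_univ, Fintype.card_fin]
  have hsq : ‖M.det‖ ^ 2
      ≤ (‖Matrix.toEuclideanLin M x‖ * sNorm M ^ (n - 1)) ^ 2 := by
    rw [hdet, ← Finset.mul_prod_erase Finset.univ μ (Finset.mem_univ j)]
    calc μ j * ∏ i ∈ Finset.univ.erase j, μ i
        ≤ ‖Matrix.toEuclideanLin M x‖ ^ 2 * (sNorm M ^ 2) ^ (n - 1) :=
          mul_le_mul hμj hprod
            (Finset.prod_nonneg fun i _ => hμ_nonneg i) (sq_nonneg _)
    _ = (‖Matrix.toEuclideanLin M x‖ * sNorm M ^ (n - 1)) ^ 2 := by ring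
  exact le_of_pow_le_pow_left₀ two_ne_zero
    (mul_nonneg (norm_nonneg _) (pow_nonneg (sNorm_nonneg M) _)) hsq



lemma eval_charpoly (A : Matrix (Fin n) (Fin n) ℂ) (lam : ℂ) :
    (Matrix.charpoly A).eval lam = (algebraMap ℂ (Matrix (Fin n) (Fin n) ℂ) lam - A).det := by
  rw [Matrix.charpoly, _root_.eval_det, Matrix.matPolyEquiv_charmatrix, Polynomial.eval_sub, Polynomial.eval_X, Polynomial.eval_C]
  congr 1

lemma mem_spectrum_of_root (A : Matrix (Fin n) (Fin n) ℂ) {μ : ℂ}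
    (h : (Matrix.charpoly A).eval μ = 0) : μ ∈ spectrum ℂ A := by
  rw [spectrum.mem_iff]
  intro hu
  have := ((Matrix.isUnit_iff_isUnit_det _).mp hu)
  rw [← eval_charpoly] at this
  rw [h] at this
  exact not_isUnit_zero this

lemma card_roots_charpoly (hn : 0 < n) (A : Matrix (Fin n) (Fin n) ℂ) :
    Multiset.card (Matrix.charpoly A).roots = n := by
  have hsp : (Matrix.charpoly A).Splits :=
    IsAlgClosed.splits _
  rw [Polynomial.splits_iff_card_roots.mp hsp, Matrix.charpoly_natDegree_eq_dim,
    Fintype.card_fin]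

lemma abs_eval_eq_prod (A : Matrix (Fin n) (Fin n) ℂ) (lam : ℂ) :
    ‖(Matrix.charpoly A).eval lam‖
      = (((Matrix.charpoly A).roots.map fun μ => ‖lam - μ‖).prod) := by
  conv_lhs => rw [Polynomial.Splits.eq_prod_roots_of_monic
    (IsAlgClosed.splits _) (Matrix.charpoly_monic A)]
  rw [Polynomial.eval_multiset_prod, Multiset.map_map,
    ← normHom_apply (α := ℂ) (Multiset.prod _), map_multiset_prod, Multiset.map_map]
  congr 1
  ext μ
  simp

lemma pow_card_le_prod (s : Multiset ℝ) {c : ℝ} (hc : 0 ≤ c) (h : ∀ x ∈ s, c ≤ x) :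
    c ^ (Multiset.card s) ≤ s.prod := by
  induction s using Multiset.induction_on with
  | empty => simp
  | cons a s ih =>
    rw [Multiset.prod_cons, Multiset.card_cons, pow_succ, mul_comm]
    exact mul_le_mul (h a (Multiset.mem_cons_self a s))
      (ih fun x hx => h x (Multiset.mem_cons_of_mem hx))
      (pow_nonneg hc _) (le_trans hc (h a (Multiset.mem_cons_self a s)))


lemma sNorm_sub_comm (A B : Matrix (Fin n) (Fin n) ℂ) : sNorm (A - B) = sNorm (B - A) := by
  unfold sNorm
  rw [(neg_sub B A).symm, map_neg, map_neg, norm_neg]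

lemma sNorm_le_of_bound (A : Matrix (Fin n) (Fin n) ℂ) {c : ℝ} (hc : 0 ≤ c)
    (h : ∀ x : EuclideanSpace ℂ (Fin n), ‖Matrix.toEuclideanLin A x‖ ≤ c * ‖x‖) :
    sNorm A ≤ c :=
  ContinuousLinearMap.opNorm_le_bound _ hc (by simpa using h)

lemma spectrum_toEuclideanLin' (A : Matrix (Fin n) (Fin n) ℂ) :
    spectrum ℂ (Matrix.toEuclideanLin A) = spectrum ℂ A :=
  AlgEquiv.spectrum_eq (Matrix.toLinAlgEquiv (PiLp.basisFun 2 ℂ (Fin n))) _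

lemma exists_unit_eigenvector (B : Matrix (Fin n) (Fin n) ℂ) {lam : ℂ}
    (hlam : lam ∈ spectrum ℂ B) :
    ∃ x : EuclideanSpace ℂ (Fin n), ‖x‖ = 1 ∧ Matrix.toEuclideanLin B x = lam • x := by
  rw [← spectrum_toEuclideanLin'] at hlam
  have hev : Module.End.HasEigenvalue (Matrix.toEuclideanLin B) lam :=
    Module.End.hasEigenvalue_iff_mem_spectrum.mpr hlam
  obtain ⟨v, hv⟩ := hev.exists_hasEigenvector
  refine ⟨‖v‖⁻¹ • v, norm_smul_inv_norm hv.2, ?_⟩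
  rw [LinearMap.map_smul_of_tower, hv.apply_eq_smul, smul_comm]

lemma key (hn : 0 < n) (A B : Matrix (Fin n) (Fin n) ℂ) {lam : ℂ}
    (hlam : lam ∈ spectrum ℂ B) :
    ∃ μ ∈ spectrum ℂ A, dist lam μ ≤
      (sNorm A + sNorm B) ^ ((1 : ℝ) - 1 / n) * sNorm (A - B) ^ ((1 : ℝ) / n) := by
  obtain ⟨x, hx1, hxB⟩ := exists_unit_eigenvector B hlam
  have hSnn : (0 : ℝ) ≤ sNorm A + sNorm B := add_nonneg (sNorm_nonneg A) (sNorm_nonneg B)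
  have hABnn : (0 : ℝ) ≤ sNorm (A - B) := sNorm_nonneg _
  have hlamB : ‖lam‖ ≤ sNorm B := by
    have h := norm_apply_le B x
    rw [hxB, norm_smul, hx1, mul_one, mul_one] at h
    exact h
  set M : Matrix (Fin n) (Fin n) ℂ := algebraMap ℂ (Matrix (Fin n) (Fin n) ℂ) lam - A with hMdef
  have hone : Matrix.toEuclideanLin (1 : Matrix (Fin n) (Fin n) ℂ) = LinearMap.id := by
    rw [Matrix.toEuclideanLin_eq_toLin, Matrix.toLin_one]
  have hMapp : ∀ y : EuclideanSpace ℂ (Fin n),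
      Matrix.toEuclideanLin M y = lam • y - Matrix.toEuclideanLin A y := by
    intro y
    simp only [hMdef, map_sub, Algebra.algebraMap_eq_smul_one, _root_.map_smul, hone,
      LinearMap.sub_apply, LinearMap.smul_apply, LinearMap.id_apply]
  have hMx : ‖Matrix.toEuclideanLin M x‖ ≤ sNorm (A - B) := by
    have h : Matrix.toEuclideanLin M x = Matrix.toEuclideanLin (B - A) x := by
      rw [hMapp, ← hxB, map_sub, LinearMap.sub_apply]
    rw [h, sNorm_sub_comm]
    have h2 := norm_apply_le (B - A) x
    rwa [hx1, mul_one] at h2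
  have hsM : sNorm M ≤ sNorm A + sNorm B := by
    refine sNorm_le_of_bound _ hSnn fun y => ?_
    rw [hMapp]
    calc ‖lam • y - Matrix.toEuclideanLin A y‖
        ≤ ‖lam • y‖ + ‖Matrix.toEuclideanLin A y‖ := norm_sub_le _ _
    _ ≤ sNorm B * ‖y‖ + sNorm A * ‖y‖ := by
        refine add_le_add ?_ (norm_apply_le A y)
        rw [norm_smul]
        exact mul_le_mul_of_nonneg_right hlamB (norm_nonneg y)
    _ = (sNorm A + sNorm B) * ‖y‖ := by ring
  have hdetle : ‖M.det‖ ≤ sNorm (A - B) * (sNorm A + sNorm B) ^ (n - 1) := by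
    refine le_trans (abs_det_le hn M x hx1) ?_
    exact mul_le_mul hMx (pow_le_pow_left₀ (sNorm_nonneg M) hsM (n - 1))
      (pow_nonneg (sNorm_nonneg M) _) hABnn
  have hcard := card_roots_charpoly hn A
  have hne : (Matrix.charpoly A).roots.toFinset.Nonempty := by
    rw [Multiset.toFinset_nonempty]
    intro h0
    rw [h0] at hcard
    simp at hcard
    omega
  obtain ⟨μ₀, hμ₀mem, hmin⟩ :=
    Finset.exists_min_image _ (fun μ => ‖lam - μ‖) hne
  have hμ₀root : μ₀ ∈ (Matrix.charpoly A).roots := Multiset.mem_toFinset.mp hμ₀mem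
  have hspec : μ₀ ∈ spectrum ℂ A :=
    mem_spectrum_of_root A (Polynomial.mem_roots'.mp hμ₀root).2
  set d : ℝ := ‖lam - μ₀‖ with hddef
  have hd0 : 0 ≤ d := norm_nonneg _
  have hdn : d ^ n ≤ ‖M.det‖ := by
    have hall : ∀ t ∈ (Matrix.charpoly A).roots.map fun μ => ‖lam - μ‖, d ≤ t := by
      intro t ht
      obtain ⟨μ, hμ, rfl⟩ := Multiset.mem_map.mp ht
      exact hmin μ (Multiset.mem_toFinset.mpr hμ)
    have h := pow_card_le_prod _ hd0 hall
    rw [Multiset.card_map, hcard] at h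
    rw [← abs_eval_eq_prod, eval_charpoly] at h
    exact h
  refine ⟨μ₀, hspec, ?_⟩
  rw [Complex.dist_eq, ← hddef]
  set K : ℝ := sNorm (A - B) * (sNorm A + sNorm B) ^ (n - 1) with hKdef
  have hKnn : 0 ≤ K := mul_nonneg hABnn (pow_nonneg hSnn _)
  have hnR : ((n : ℝ)) ≠ 0 := Nat.cast_ne_zero.mpr hn.ne'
  have h1 : d ≤ K ^ ((1 : ℝ) / n) := by
    have h2 : ((d ^ n : ℝ)) ^ ((1 : ℝ) / n) ≤ K ^ ((1 : ℝ) / n) :=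
      Real.rpow_le_rpow (pow_nonneg hd0 n) (le_trans hdn hdetle) (by positivity)
    rwa [← Real.rpow_natCast d n, ← Real.rpow_mul hd0, mul_one_div, div_self hnR,
      Real.rpow_one] at h2
  refine h1.trans (le_of_eq ?_)
  rw [hKdef, Real.mul_rpow hABnn (pow_nonneg hSnn _), mul_comm]
  congr 1
  rw [← Real.rpow_natCast (sNorm A + sNorm B) (n - 1), ← Real.rpow_mul hSnn]
  congr 1
  rw [Nat.cast_sub hn, Nat.cast_one]
  field_simp

end ElsnerAux

theorem stmt16 (n : ℕ) (hn : 0 < n) (A B : Matrix (Fin n) (Fin n) ℂ) :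
    Metric.hausdorffDist (spectrum ℂ A) (spectrum ℂ B) ≤
      (sNorm A + sNorm B) ^ ((1 : ℝ) - 1 / n) * sNorm (A - B) ^ ((1 : ℝ) / n) := by
  have hSnn : (0 : ℝ) ≤ sNorm A + sNorm B :=
    add_nonneg (ElsnerAux.sNorm_nonneg A) (ElsnerAux.sNorm_nonneg B)
  have hr : (0 : ℝ) ≤ (sNorm A + sNorm B) ^ ((1 : ℝ) - 1 / n) * sNorm (A - B) ^ ((1 : ℝ) / n) :=
    mul_nonneg (Real.rpow_nonneg hSnn _) (Real.rpow_nonneg (ElsnerAux.sNorm_nonneg _) _)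
  refine Metric.hausdorffDist_le_of_mem_dist hr ?_ ?_
  · intro lam hlam
    obtain ⟨μ, hμ, hd⟩ := ElsnerAux.key hn B A hlam
    refine ⟨μ, hμ, ?_⟩
    rwa [add_comm (sNorm B), ElsnerAux.sNorm_sub_comm] at hd
  · intro lam hlam
    obtain ⟨μ, hμ, hd⟩ := ElsnerAux.key hn A B hlam
    exact ⟨μ, hμ, hd⟩
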